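/- In the two-group measurement-error model with group membership included, the population least-squares predictor has zero expected residual within each group: E[y - ŷ | g=0] = E[y - ŷ | g=1] = 0. -/

import Mathlib

open MeasureTheory ProbabilityTheory Matrix

/-- Mean vector of a random vector. -/
noncomputable def meanV {Ω : Type*} [MeasurableSpace Ω] (P : Measure Ω) {d : ℕ}
    (z : Ω → Fin d → ℝ) : Fin d → ℝ := fun i => ∫ ω, z ω i ∂P

/-- Covariance matrix of a random vector. -/
noncomputable def covM {Ω : Type*} [MeasurableSpace Ω] (P : Measure Ω) {d : ℕ}
    (z : Ω → Fin d → ℝ) : Matrix (Fin d) (Fin d) ℝ :=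
  Matrix.of fun i j => ∫ ω, (z ω i - meanV P z i) * (z ω j - meanV P z j) ∂P

/-- Two-group measurement-error model with group membership included: the
population least-squares predictor has zero expected residual within each
group. -/
theorem stmt_9 {Ω : Type*} [MeasurableSpace Ω] (P : Measure Ω) [IsProbabilityMeasure P]
    {d : ℕ} (z u x : Ω → Fin d → ℝ) (g y yhat : Ω → ℝ) (β : Fin d → ℝ) (α : ℝ)
    (Λ' EVarz : Matrix (Fin d) (Fin d) ℝ) (Δμz μ0 : Fin d → ℝ)
    (hgval : ∀ ω, g ω = 0 ∨ g ω = 1)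
    (hgmeas : Measurable g)
    (hppos : 0 < P (g ⁻¹' {1}) ∧ P (g ⁻¹' {1}) < 1)
    (hx : ∀ ω, x ω = fun i => z ω i + u ω i)
    (hy : ∀ ω, y ω = β ⬝ᵥ z ω + α)
    (hindep : IndepFun (fun ω => (z ω, g ω)) u P)
    (hzL2 : ∀ i, MemLp (fun ω => z ω i) 2 P)
    (huL2 : ∀ i, MemLp (fun ω => u ω i) 2 P)
    (hu0 : ∀ i, ∫ ω, u ω i ∂P = 0)
    (hEVar : EVarz = (P (g ⁻¹' {1})).toReal • covM (ProbabilityTheory.cond P (g ⁻¹' {1})) z +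
      (P (g ⁻¹' {0})).toReal • covM (ProbabilityTheory.cond P (g ⁻¹' {0})) z)
    (hinv : IsUnit (EVarz + covM P u).det)
    (hΛ : Λ' = (EVarz + covM P u)⁻¹ * covM P u)
    (hμ0 : μ0 = meanV (ProbabilityTheory.cond P (g ⁻¹' {0})) z)
    (hΔ : ∀ i, Δμz i = meanV (ProbabilityTheory.cond P (g ⁻¹' {1})) z i - μ0 i)
    (hyhat : ∀ ω, yhat ω = ((1 - Λ') *ᵥ β) ⬝ᵥ x ω + ((Λ' *ᵥ β) ⬝ᵥ Δμz) * g ω +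
      ((Λ' *ᵥ β) ⬝ᵥ μ0 + α)) :
    (∫ ω, (y ω - yhat ω) ∂(ProbabilityTheory.cond P (g ⁻¹' {0}))) = 0 ∧
      (∫ ω, (y ω - yhat ω) ∂(ProbabilityTheory.cond P (g ⁻¹' {1}))) = 0 := by
  classical
  set v : Fin d → ℝ := Λ' *ᵥ β with hv
  set w : Fin d → ℝ := (1 - Λ') *ᵥ β with hw
  set c : ℝ := v ⬝ᵥ Δμz with hc
  set k : ℝ := v ⬝ᵥ μ0 with hk
  -- pointwise form of the residual
  have hres : ∀ ω, y ω - yhat ω = v ⬝ᵥ z ω - w ⬝ᵥ u ω - c * g ω - k := by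
    intro ω
    have hzu : (fun i => z ω i + u ω i) = z ω + u ω := rfl
    rw [hy, hyhat, hx, hzu]
    simp only [hw, Matrix.sub_mulVec, Matrix.one_mulVec, sub_dotProduct,
      dotProduct_add]
    ring
  -- key computation on each group
  have key : ∀ b : ℝ, P (g ⁻¹' {b}) ≠ 0 →
      ∫ ω, (y ω - yhat ω) ∂(ProbabilityTheory.cond P (g ⁻¹' {b})) =
        v ⬝ᵥ meanV (ProbabilityTheory.cond P (g ⁻¹' {b})) z - c * b - k := by
    intro b hb
    set A : Set Ω := g ⁻¹' {b} with hA
    have hAm : MeasurableSet A := hgmeas (measurableSet_singleton b)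
    haveI : IsProbabilityMeasure (ProbabilityTheory.cond P A) :=
      cond_isProbabilityMeasure hb
    have hQdef : ProbabilityTheory.cond P A = (P A)⁻¹ • P.restrict A := rfl
    have hint : ∀ f : Ω → ℝ, Integrable f P →
        Integrable f (ProbabilityTheory.cond P A) := by
      intro f hf
      rw [hQdef]
      exact hf.restrict.smul_measure (ENNReal.inv_ne_top.2 hb)
    have hzP : ∀ i, Integrable (fun ω => z ω i) P :=
      fun i => (hzL2 i).integrable one_le_two
    have huP : ∀ i, Integrable (fun ω => u ω i) P :=
      fun i => (huL2 i).integrable one_le_two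
    have hzQ : ∀ i, Integrable (fun ω => z ω i) (ProbabilityTheory.cond P A) :=
      fun i => hint _ (hzP i)
    have huQ : ∀ i, Integrable (fun ω => u ω i) (ProbabilityTheory.cond P A) :=
      fun i => hint _ (huP i)
    -- u has zero conditional mean by independence
    have hu0Q : ∀ i, ∫ ω, u ω i ∂(ProbabilityTheory.cond P A) = 0 := by
      intro i
      set φ : ℝ → ℝ := Set.indicator ({b} : Set ℝ) (fun _ => (1 : ℝ)) with hφ
      have hφm : Measurable φ :=
        measurable_const.indicator (measurableSet_singleton b)
      have hgu : IndepFun g (fun ω => u ω i) P :=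
        hindep.comp measurable_snd (measurable_pi_apply i)
      have hXu : IndepFun (φ ∘ g) (fun ω => u ω i) P :=
        hgu.comp hφm measurable_id
      have hmul : ∫ ω, (φ ∘ g) ω * u ω i ∂P =
          (∫ ω, (φ ∘ g) ω ∂P) * ∫ ω, u ω i ∂P := by
        exact hXu.integral_fun_mul_eq_mul_integral ((hφm.comp hgmeas).aestronglyMeasurable)
          (huP i).aestronglyMeasurable
      have hind : ∀ ω, A.indicator (fun ω => u ω i) ω = (φ ∘ g) ω * u ω i := by
        intro ω
        by_cases h : ω ∈ A
        · have : g ω = b := h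
          simp [Set.indicator_of_mem h, hφ, Function.comp, this]
        · have : ¬ g ω = b := h
          simp [Set.indicator_of_notMem h, hφ, Function.comp, this]
      rw [hQdef, integral_smul_measure]
      have : ∫ ω in A, u ω i ∂P = 0 := by
        rw [← integral_indicator hAm]
        calc ∫ ω, A.indicator (fun ω => u ω i) ω ∂P
            = ∫ ω, (φ ∘ g) ω * u ω i ∂P := by
              exact integral_congr_ae (Filter.Eventually.of_forall hind)
          _ = (∫ ω, (φ ∘ g) ω ∂P) * ∫ ω, u ω i ∂P := hmul
          _ = 0 := by rw [hu0 i, mul_zero]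
      rw [this, smul_zero]
    -- g ≡ b on the conditional measure
    have hgae : ∀ᵐ ω ∂(ProbabilityTheory.cond P A), g ω = b := by
      rw [hQdef]
      exact Measure.ae_smul_measure ((ae_restrict_mem hAm).mono fun ω hω => hω) _
    have hgQ : Integrable g (ProbabilityTheory.cond P A) :=
      (integrable_const b).congr (hgae.mono fun ω h => h.symm)
    have hgint : ∫ ω, g ω ∂(ProbabilityTheory.cond P A) = b := by
      rw [integral_congr_ae (hgae.mono fun ω h => h)]
      simp
    -- integrability of the pieces
    have hIz : Integrable (fun ω => v ⬝ᵥ z ω) (ProbabilityTheory.cond P A) := by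
      simp only [dotProduct]
      exact integrable_finset_sum _ fun i _ => (hzQ i).const_mul _
    have hIu : Integrable (fun ω => w ⬝ᵥ u ω) (ProbabilityTheory.cond P A) := by
      simp only [dotProduct]
      exact integrable_finset_sum _ fun i _ => (huQ i).const_mul _
    have hEz : ∫ ω, v ⬝ᵥ z ω ∂(ProbabilityTheory.cond P A) =
        v ⬝ᵥ meanV (ProbabilityTheory.cond P A) z := by
      simp only [dotProduct, meanV]
      rw [integral_finset_sum _ fun i _ => (hzQ i).const_mul _]
      exact Finset.sum_congr rfl fun i _ => integral_const_mul _ _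
    have hEu : ∫ ω, w ⬝ᵥ u ω ∂(ProbabilityTheory.cond P A) = 0 := by
      simp only [dotProduct]
      rw [integral_finset_sum _ fun i _ => (huQ i).const_mul _]
      refine Finset.sum_eq_zero fun i _ => ?_
      rw [integral_const_mul, hu0Q i, mul_zero]
    calc ∫ ω, (y ω - yhat ω) ∂(ProbabilityTheory.cond P A)
        = ∫ ω, (v ⬝ᵥ z ω - w ⬝ᵥ u ω - c * g ω - k) ∂(ProbabilityTheory.cond P A) := by
          exact integral_congr_ae (Filter.Eventually.of_forall fun ω => hres ω)
      _ = v ⬝ᵥ meanV (ProbabilityTheory.cond P A) z - c * b - k := by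
          have hI2 : Integrable (fun ω => v ⬝ᵥ z ω - w ⬝ᵥ u ω)
              (ProbabilityTheory.cond P A) := hIz.sub hIu
          have hIg : Integrable (fun ω => c * g ω)
              (ProbabilityTheory.cond P A) := hgQ.const_mul c
          have hI3 : Integrable (fun ω => v ⬝ᵥ z ω - w ⬝ᵥ u ω - c * g ω)
              (ProbabilityTheory.cond P A) := hI2.sub hIg
          rw [integral_sub hI3 (integrable_const k),
            integral_sub hI2 hIg, integral_sub hIz hIu,
            hEz, hEu, integral_const_mul, hgint, integral_const]
          simp
  -- positivity of the two group probabilities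
  have h1ne : P (g ⁻¹' {1}) ≠ 0 := hppos.1.ne'
  have h0ne : P (g ⁻¹' {0}) ≠ 0 := by
    intro h0
    have hun : (g ⁻¹' {0}) ∪ (g ⁻¹' {1}) = Set.univ := by
      ext ω; simpa using hgval ω
    have hle : (1 : ENNReal) ≤ P (g ⁻¹' {0}) + P (g ⁻¹' {1}) := by
      calc (1 : ENNReal) = P Set.univ := (measure_univ).symm
        _ = P ((g ⁻¹' {0}) ∪ (g ⁻¹' {1})) := by rw [hun]
        _ ≤ P (g ⁻¹' {0}) + P (g ⁻¹' {1}) := measure_union_le _ _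
    rw [h0, zero_add] at hle
    exact absurd hle (not_le.mpr hppos.2)
  constructor
  · rw [key 0 h0ne, ← hμ0]
    simp [hk]
  · rw [key 1 h1ne]
    have hm : meanV (ProbabilityTheory.cond P (g ⁻¹' {1})) z = Δμz + μ0 := by
      funext i
      have := hΔ i
      simp only [Pi.add_apply]
      linarith
    rw [hm, dotProduct_add, ← hc, ← hk]
    ring
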